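/- Let n be a positive integer, A and B real n×n matrices, and z ∈ ℝⁿ. If there exists ε > 0 such that zᵀ·exp(tA)·B = 0 for all t ∈ [0, ε], then zᵀ·A^k·B = 0 for every natural number k. -/

import Mathlib

open Matrix

attribute [local instance] Matrix.linftyOpNormedRing Matrix.linftyOpNormedAlgebra

/-- Analyticity step of the Kalman rank criterion: if `zᵀ e^{tA} B = 0` for all `t` in
some interval `[0, ε]` with `ε > 0`, then all Kalman products vanish:
`zᵀ A^k B = 0` for every `k`. -/
theorem vecMul_exp_eq_zero_on_interval_imp_kalman
    {n : ℕ} (hn : 0 < n) (A B : Matrix (Fin n) (Fin n) ℝ) (z : Fin n → ℝ)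
    (hz : ∃ ε : ℝ, 0 < ε ∧ ∀ t ∈ Set.Icc (0:ℝ) ε,
      Matrix.vecMul z (NormedSpace.exp (t • A) * B) = 0) :
    ∀ k : ℕ, Matrix.vecMul z (A ^ k * B) = 0 := by
  obtain ⟨ε, hε, hf⟩ := hz
  -- continuous linear map `M ↦ zᵀ M C`
  have mkL : ∀ C : Matrix (Fin n) (Fin n) ℝ,
      ∃ L : Matrix (Fin n) (Fin n) ℝ →L[ℝ] (Fin n → ℝ),
        ∀ M, L M = Matrix.vecMul z (M * C) := by
    intro C
    refine ⟨LinearMap.toContinuousLinearMap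
      { toFun := fun M => Matrix.vecMul z (M * C)
        map_add' := by intro M N; simp [Matrix.add_mul, Matrix.vecMul_add]
        map_smul' := by
          intro c M
          funext i
          simp [Matrix.vecMul, dotProduct, Finset.mul_sum, mul_comm, mul_left_comm] },
      fun M => rfl⟩
  have key : ∀ k : ℕ, ∀ t ∈ Set.Ioo (0:ℝ) ε,
      Matrix.vecMul z (NormedSpace.exp (t • A) * (A ^ k * B)) = 0 := by
    intro k
    induction k with
    | zero =>
      intro t ht
      simpa using hf t ⟨ht.1.le, ht.2.le⟩
    | succ k ih =>
      intro t ht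
      obtain ⟨L, hL⟩ := mkL (A ^ k * B)
      have h1 : HasDerivAt (fun s : ℝ => NormedSpace.exp (s • A))
          (NormedSpace.exp (t • A) * A) t := hasDerivAt_exp_smul_const A t
      have hderiv : HasDerivAt (fun s : ℝ => L (NormedSpace.exp (s • A)))
          (L (NormedSpace.exp (t • A) * A)) t :=
        L.hasFDerivAt.comp_hasDerivAt t h1
      have heq : (fun s : ℝ => L (NormedSpace.exp (s • A))) =ᶠ[nhds t]
          (fun _ => (0 : Fin n → ℝ)) := by
        filter_upwards [isOpen_Ioo.mem_nhds ht] with s hs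
        rw [hL]; exact ih s hs
      have hzero : HasDerivAt (fun s : ℝ => L (NormedSpace.exp (s • A)))
          (0 : Fin n → ℝ) t :=
        (hasDerivAt_const t (0 : Fin n → ℝ)).congr_of_eventuallyEq heq
      have huniq := hderiv.unique hzero
      rw [hL] at huniq
      rw [mul_assoc, show A * (A ^ k * B) = A ^ (k + 1) * B from by
        rw [pow_succ', mul_assoc]] at huniq
      exact huniq
  intro k
  obtain ⟨L, hL⟩ := mkL (A ^ k * B)
  have hcont : Continuous (fun t : ℝ => L (NormedSpace.exp (t • A))) :=
    L.continuous.comp (NormedSpace.exp_continuous.comp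
      (continuous_id.smul continuous_const))
  have hmem : (0:ℝ) ∈ closure (Set.Ioo (0:ℝ) ε) := by
    rw [closure_Ioo hε.ne]
    exact ⟨le_refl _, hε.le⟩
  haveI : (nhdsWithin (0:ℝ) (Set.Ioo (0:ℝ) ε)).NeBot :=
    mem_closure_iff_nhdsWithin_neBot.mp hmem
  have t1 : Filter.Tendsto (fun t : ℝ => L (NormedSpace.exp (t • A)))
      (nhdsWithin (0:ℝ) (Set.Ioo (0:ℝ) ε)) (nhds (L (NormedSpace.exp ((0:ℝ) • A)))) :=
    (hcont.tendsto _).mono_left nhdsWithin_le_nhds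
  have t2 : Filter.Tendsto (fun t : ℝ => L (NormedSpace.exp (t • A)))
      (nhdsWithin (0:ℝ) (Set.Ioo (0:ℝ) ε)) (nhds 0) := by
    refine Filter.Tendsto.congr' ?_ tendsto_const_nhds
    filter_upwards [self_mem_nhdsWithin] with s hs
    rw [hL]
    exact (key k s hs).symm
  have h0 := tendsto_nhds_unique t1 t2
  rw [hL] at h0
  simpa [NormedSpace.exp_zero] using h0
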